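/- arXiv:1012.1946 — 2 statements merged into one kernel-verified Lean document; each statement's English description precedes it below -/
import Mathlib

section
/- If X ⊆ S^{n−1} is a spherical 2e-design (e a positive integer, n ≥ 2), then |X| ≥ C(n−1+e, n−1) + C(n−2+e, n−1). -/
open MeasureTheory Metric Finset
open scoped Classical RealInnerProductSpace

noncomputable section

/-- Euclidean `n`-space `ℝⁿ`. -/
abbrev Euc (n : ℕ) := EuclideanSpace ℝ (Fin n)

/-- Evaluation of a multivariate polynomial at a point of `ℝⁿ`. -/
def evalPt {n : ℕ} (x : Euc n) (p : MvPolynomial (Fin n) ℝ) : ℝ :=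
  MvPolynomial.eval (fun i => x i) p

/-- The normalized average (with respect to the `O(n)`-invariant surface measure,
i.e. the `(n-1)`-dimensional Hausdorff measure) of `f` over the sphere of radius `r`
centered at the origin; for `r = 0` it is `f 0`. -/
def sphAvg (n : ℕ) (r : ℝ) (f : Euc n → ℝ) : ℝ :=
  if r = 0 then f 0
  else ⨍ y in Metric.sphere (0 : Euc n) r, f y ∂(μH[(n : ℝ) - 1])

/-- `(X, w)` is a Euclidean `t`-design in `ℝⁿ`:
`∑ᵢ (w(Xᵢ)/|Sᵢ|) ∫_{Sᵢ} f dσᵢ = ∑_{x ∈ X} w(x) f(x)` for all polynomials `f` of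
degree at most `t`, where the `Sᵢ` are the concentric spheres supporting `X`. -/
def IsEuclideanDesign (n t : ℕ) (X : Finset (Euc n)) (w : Euc n → ℝ) : Prop :=
  ∀ p : MvPolynomial (Fin n) ℝ, p.totalDegree ≤ t →
    ∑ r ∈ X.image (fun x => ‖x‖),
        (∑ x ∈ X.filter (fun x => ‖x‖ = r), w x) * sphAvg n r (fun y => evalPt y p)
      = ∑ x ∈ X, w x * evalPt x p

/-- Restriction of polynomials to a subset `S ⊆ ℝⁿ`, as a linear map. -/
def polyRestrict (n : ℕ) (S : Set (Euc n)) :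
    MvPolynomial (Fin n) ℝ →ₗ[ℝ] (S → ℝ) where
  toFun p := fun x => evalPt (x : Euc n) p
  map_add' p q := by funext x; simp [evalPt]
  map_smul' c p := by funext x; simp [evalPt, MvPolynomial.smul_eval]

/-- `Pol_e(S)`: the space of restrictions to `S` of polynomials of total degree at most `e`. -/
def PolOn (n e : ℕ) (S : Set (Euc n)) : Submodule ℝ (S → ℝ) :=
  (MvPolynomial.restrictTotalDegree (Fin n) ℝ e).map (polyRestrict n S)

/-- `dim Pol_e(S)`. -/
def dimPolOn (n e : ℕ) (S : Set (Euc n)) : ℕ := Module.finrank ℝ (PolOn n e S)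

/-- The union of the concentric spheres (centered at the origin) supporting `X`. -/
def suppSpheres (n : ℕ) (X : Finset (Euc n)) : Set (Euc n) :=
  ⋃ r ∈ X.image (fun x => ‖x‖), Metric.sphere (0 : Euc n) r

/-- `(X, w)` is a tight Euclidean `2e`-design on `S` (the union of the concentric
spheres supporting `X`): it is a Euclidean `2e`-design with `|X| = dim Pol_e(S)`. -/
def IsTightOnS (n e : ℕ) (X : Finset (Euc n)) (w : Euc n → ℝ) : Prop :=
  IsEuclideanDesign n (2 * e) X w ∧ X.card = dimPolOn n e (suppSpheres n X)

/-- `(X, w)` is a tight Euclidean `2e`-design: tight on `S` and moreover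
`dim Pol_e(S) = dim Pol_e(ℝⁿ) = C(n+e, e)`. -/
def IsTightDesign (n e : ℕ) (X : Finset (Euc n)) (w : Euc n → ℝ) : Prop :=
  IsTightOnS n e X w ∧ dimPolOn n e (suppSpheres n X) = (n + e).choose e

/-- `Y` is a spherical `t`-design on the unit sphere `S^{n-1} ⊆ ℝⁿ`:
the average of every polynomial of degree at most `t` over the sphere (with respect to
the `O(n)`-invariant surface measure) equals its average over `Y`. -/
def IsSphericalDesign (n t : ℕ) (Y : Finset (Euc n)) : Prop :=
  Y.Nonempty ∧ (↑Y : Set (Euc n)) ⊆ Metric.sphere (0 : Euc n) 1 ∧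
    ∀ p : MvPolynomial (Fin n) ℝ, p.totalDegree ≤ t →
      (⨍ x in Metric.sphere (0 : Euc n) 1, evalPt x p ∂(μH[(n : ℝ) - 1]))
        = (∑ x ∈ Y, evalPt x p) / Y.card

namespace SDAux

def mprod (n : ℕ) (m : Multiset (Fin n)) : MvPolynomial (Fin n) ℝ :=
  (m.map MvPolynomial.X).prod

variable {n : ℕ}

lemma mprod_eq_monomial (m : Multiset (Fin n)) :
    mprod n m = MvPolynomial.monomial (Multiset.toFinsupp m) 1 := by
  induction m using Multiset.induction_on with
  | empty => simp [mprod]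
  | cons a s ih =>
      have h1 : Multiset.toFinsupp (a ::ₘ s) = Finsupp.single a 1 + Multiset.toFinsupp s := by
        rw [← Multiset.singleton_add, Multiset.toFinsupp_add, Multiset.toFinsupp_singleton]
      rw [mprod, Multiset.map_cons, Multiset.prod_cons, ← mprod, ih, h1]
      rw [MvPolynomial.X, MvPolynomial.monomial_mul, one_mul]

lemma evalPt_mprod (x : Euc n) (m : Multiset (Fin n)) :
    evalPt x (mprod n m) = (m.map fun i => x i).prod := by
  simp [evalPt, mprod, map_multiset_prod, Multiset.map_map, Function.comp]

lemma evalPt_mprod_smul (c : ℝ) (x : Euc n) (m : Multiset (Fin n)) :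
    evalPt (c • x) (mprod n m) = c ^ (Multiset.card m) * evalPt x (mprod n m) := by
  rw [evalPt_mprod, evalPt_mprod]
  have hcx : ∀ i, (c • x) i = c * x i := fun i => rfl
  induction m using Multiset.induction_on with
  | empty => simp
  | cons a s ih =>
      simp only [Multiset.map_cons, Multiset.prod_cons, Multiset.card_cons, hcx, pow_succ]
      simp only [hcx] at ih
      rw [ih]
      ring

lemma totalDegree_mprod_le (m : Multiset (Fin n)) :
    (mprod n m).totalDegree ≤ Multiset.card m := by
  refine (MvPolynomial.totalDegree_multiset_prod _).trans ?_
  simp [Multiset.map_map, Function.comp, MvPolynomial.totalDegree_X]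

lemma continuous_evalPt (p : MvPolynomial (Fin n) ℝ) :
    Continuous fun x : Euc n => evalPt x p := by
  have h : Continuous fun x : Euc n => (fun i => x i : Fin n → ℝ) :=
    continuous_pi fun i =>
      ((EuclideanSpace.proj i : Euc n →L[ℝ] ℝ).continuous).congr (fun x => rfl)
  exact (MvPolynomial.continuous_eval (p := p)).comp h

lemma measure_ne_zero_of_ev_ne (p : MvPolynomial (Fin n) ℝ) {x0 : Euc n}
    (hx0 : x0 ∈ Metric.sphere (0 : Euc n) 1) (hp : evalPt x0 p ≠ 0)
    (hS : μH[(n : ℝ) - 1] (Metric.sphere (0 : Euc n) 1) ≠ 0) :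
    μH[(n : ℝ) - 1] ({x : Euc n | evalPt x p ≠ 0} ∩ Metric.sphere (0 : Euc n) 1) ≠ 0 := by
  intro hz
  set μ : Measure (Euc n) := μH[(n : ℝ) - 1] with hμ
  set S := Metric.sphere (0 : Euc n) 1 with hSdef
  set U := {x : Euc n | evalPt x p ≠ 0} with hUdef
  have hUopen : IsOpen U := isOpen_compl_singleton.preimage (continuous_evalPt p)
  have hx0U : x0 ∈ U := hp
  have hx0n : ‖x0‖ = 1 := mem_sphere_zero_iff_norm.1 hx0
  have hrefl : ∀ y ∈ S, ∃ f : Euc n ≃ₗᵢ[ℝ] Euc n, f x0 = y := by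
    intro y hy
    exact ⟨Submodule.reflection (ℝ ∙ (x0 - y))ᗮ,
      Submodule.reflection_sub (by rw [hx0n, mem_sphere_zero_iff_norm.1 hy])⟩
  choose! f hf using hrefl
  have hcover : S ⊆ ⋃ y ∈ S, (f y) '' U := by
    intro y hy
    exact Set.mem_biUnion hy ⟨x0, hx0U, hf y hy⟩
  obtain ⟨b, hbS, hbfin, hb⟩ :=
    (isCompact_sphere (0 : Euc n) 1).elim_finite_subcover_image
      (fun y _ => ((f y).toHomeomorph.isOpenMap) U hUopen) hcover
  have hpiece : ∀ y ∈ S, μ ((f y '' U) ∩ S) = 0 := by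
    intro y hy
    have himg : f y '' S = S := by
      have := (f y).toIsometryEquiv.image_sphere (0 : Euc n) 1
      simpa [hSdef] using this
    have h1 : (f y '' U) ∩ S = f y '' (U ∩ S) := by
      rw [Set.image_inter (f y).injective, himg]
    rw [h1, Isometry.hausdorffMeasure_image (f y).isometry (Or.inr (f y).surjective)]
    exact hz
  have hS0 : μ S = 0 := by
    refine le_antisymm ?_ zero_le
    calc μ S ≤ μ (⋃ y ∈ hbfin.toFinset, (f y '' U) ∩ S) := by
              refine measure_mono fun x hx => ?_
              obtain ⟨y, hyb, hxy⟩ := Set.mem_iUnion₂.1 (hb hx)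
              exact Set.mem_iUnion₂.2 ⟨y, hbfin.mem_toFinset.2 hyb, hxy, hx⟩
      _ ≤ ∑ y ∈ hbfin.toFinset, μ ((f y '' U) ∩ S) := measure_biUnion_finset_le _ _
      _ = 0 := Finset.sum_eq_zero fun y hy =>
              hpiece y (hbS (hbfin.mem_toFinset.1 hy))
  exact hS hS0

end SDAux

/-- If `X ⊆ S^{n-1}` is a spherical `2e`-design (`e ≥ 1`, `n ≥ 2`),
then `|X| ≥ C(n-1+e, n-1) + C(n-2+e, n-1)`. -/
theorem spherical_design_card_lower_bound (n e : ℕ) (hn : 2 ≤ n) (he : 1 ≤ e)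
    (Y : Finset (Euc n)) (hY : IsSphericalDesign n (2 * e) Y) :
    (n - 1 + e).choose (n - 1) + (n - 2 + e).choose (n - 1) ≤ Y.card := by
  classical
  obtain ⟨hYne, hYsub, hdes⟩ := hY
  set μ : Measure (Euc n) := μH[(n : ℝ) - 1] with hμdef
  set S := Metric.sphere (0 : Euc n) 1 with hSdef
  have hcardR : ((Y.card : ℝ)) ≠ 0 := Nat.cast_ne_zero.2 hYne.card_pos.ne'
  -- Step 1: the sphere has nonzero finite measure
  have hone := hdes 1 (by simp)
  simp only [map_one, evalPt] at hone
  rw [setAverage_eq, setIntegral_const, Finset.sum_const, smul_eq_mul,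
    smul_eq_mul, mul_one, nsmul_eq_mul, mul_one, div_self hcardR] at hone
  have htR : (μ S).toReal ≠ 0 := by
    intro h
    rw [show μ.real S = 0 from h] at hone
    simp at hone
  obtain ⟨hμ0, hμt⟩ := ENNReal.toReal_ne_zero.1 htR
  -- Step 2: linear independence of the monomial evaluations of degrees e and e-1
  set ms : (Sym (Fin n) e ⊕ Sym (Fin n) (e - 1)) → Multiset (Fin n) :=
    Sum.elim (fun s => s.1) (fun s => s.1) with hms
  set g : (Sym (Fin n) e ⊕ Sym (Fin n) (e - 1)) → (↥Y → ℝ) :=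
    fun i y => evalPt (y : Euc n) (SDAux.mprod n (ms i)) with hg
  have hli : LinearIndependent ℝ g := by
    rw [Fintype.linearIndependent_iff]
    intro c hc
    set p : MvPolynomial (Fin n) ℝ := ∑ i, c i • SDAux.mprod n (ms i) with hpdef
    set qe : MvPolynomial (Fin n) ℝ :=
      ∑ s : Sym (Fin n) e, c (Sum.inl s) • SDAux.mprod n s.1 with hqe
    set qo : MvPolynomial (Fin n) ℝ :=
      ∑ s : Sym (Fin n) (e - 1), c (Sum.inr s) • SDAux.mprod n s.1 with hqo
    have hsplit : p = qe + qo := by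
      rw [hpdef, Fintype.sum_sum_type, hqe, hqo]
      rfl
    have hpY : ∀ y ∈ Y, evalPt y p = 0 := by
      intro y hy
      have h := congrFun hc ⟨y, hy⟩
      simpa [hpdef, evalPt, map_sum, MvPolynomial.smul_eval, hg] using h
    have hdeg : p.totalDegree ≤ e := by
      rw [hpdef]
      refine (MvPolynomial.totalDegree_finset_sum _ _).trans (Finset.sup_le fun i _ => ?_)
      refine (MvPolynomial.totalDegree_smul_le _ _).trans
        ((SDAux.totalDegree_mprod_le _).trans ?_)
      cases i with
      | inl s => rw [show ms (Sum.inl s) = s.1 from rfl, s.2]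
      | inr s => rw [show ms (Sum.inr s) = s.1 from rfl, s.2]; omega
    have hsq := hdes (p * p) ((MvPolynomial.totalDegree_mul p p).trans
      (le_trans (add_le_add hdeg hdeg) (by omega)))
    have hRHS : ∑ x ∈ Y, evalPt x (p * p) = 0 := Finset.sum_eq_zero fun y hy => by
      have h0 := hpY y hy
      simp only [evalPt, map_mul] at h0 ⊢
      rw [h0, mul_zero]
    rw [hRHS, zero_div, setAverage_eq] at hsq
    have hint0 : ∫ x in S, evalPt x (p * p) ∂μ = 0 := by
      rcases (by simpa [smul_eq_mul, mul_eq_zero] using hsq :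
        μ.real S = 0 ∨ ∫ x in S, evalPt x (p * p) ∂μ = 0) with h | h
      · exact absurd h htR
      · exact h
    haveI : IsFiniteMeasure (μ.restrict S) :=
      ⟨by rw [Measure.restrict_apply_univ]; exact hμt.lt_top⟩
    have hcont := SDAux.continuous_evalPt (p := p * p)
    obtain ⟨C, hC⟩ :=
      (isCompact_sphere (0 : Euc n) 1).exists_bound_of_continuousOn hcont.continuousOn
    have hintg : IntegrableOn (fun x => evalPt x (p * p)) S μ := by
      refine Integrable.mono' (integrable_const C) hcont.aestronglyMeasurable ?_
      exact (ae_restrict_iff' isClosed_sphere.measurableSet).2 (ae_of_all _ hC)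
    have hnn : 0 ≤ fun x : Euc n => evalPt x (p * p) := by
      intro x
      simp only [evalPt, map_mul, Pi.zero_apply]
      exact mul_self_nonneg _
    have hae := (integral_eq_zero_iff_of_nonneg hnn hintg).1 hint0
    have hnull : μ ({x : Euc n | evalPt x p ≠ 0} ∩ S) = 0 := by
      have h2 : μ.restrict S {x : Euc n | evalPt x (p * p) ≠ 0} = 0 := by
        simpa [Filter.EventuallyEq, ae_iff] using hae
      rw [Measure.restrict_apply' isClosed_sphere.measurableSet] at h2
      have hset : {x : Euc n | evalPt x p ≠ 0} = {x : Euc n | evalPt x (p * p) ≠ 0} := by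
        ext x
        simp only [Set.mem_setOf_eq, evalPt, map_mul]
        exact (mul_self_ne_zero).symm
      rw [hset]
      exact h2
    have hvanS : ∀ x ∈ S, evalPt x p = 0 := by
      intro x hx
      by_contra hne
      exact SDAux.measure_ne_zero_of_ev_ne p hx hne hμ0 hnull
    -- scaling of homogeneous parts
    have hscE : ∀ (t : ℝ) (x : Euc n), evalPt (t • x) qe = t ^ e * evalPt x qe := by
      intro t x
      rw [hqe]
      simp only [evalPt, map_sum, MvPolynomial.smul_eval]
      rw [Finset.mul_sum]
      refine Finset.sum_congr rfl fun s _ => ?_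
      have h := SDAux.evalPt_mprod_smul t x s.1
      rw [s.2] at h
      simp only [evalPt] at h
      rw [h]
      ring
    have hscO : ∀ (t : ℝ) (x : Euc n), evalPt (t • x) qo = t ^ (e - 1) * evalPt x qo := by
      intro t x
      rw [hqo]
      simp only [evalPt, map_sum, MvPolynomial.smul_eval]
      rw [Finset.mul_sum]
      refine Finset.sum_congr rfl fun s _ => ?_
      have h := SDAux.evalPt_mprod_smul t x s.1
      rw [s.2] at h
      simp only [evalPt] at h
      rw [h]
      ring
    have hq0 : ∀ x ∈ S, evalPt x qe = 0 ∧ evalPt x qo = 0 := by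
      intro x hx
      have hxm : -x ∈ S := by
        rw [hSdef, mem_sphere_zero_iff_norm, norm_neg]
        exact mem_sphere_zero_iff_norm.1 hx
      have h1 : evalPt x qe + evalPt x qo = 0 := by
        have h := hvanS x hx
        rw [hsplit] at h
        simpa [evalPt, map_add] using h
      have h2 : (-1 : ℝ) ^ e * evalPt x qe + (-1 : ℝ) ^ (e - 1) * evalPt x qo = 0 := by
        have h := hvanS (-x) hxm
        rw [hsplit] at h
        have hneg : (-x : Euc n) = (-1 : ℝ) • x := (neg_one_smul ℝ x).symm
        rw [hneg] at h
        have hadd : evalPt ((-1 : ℝ) • x) (qe + qo)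
            = evalPt ((-1 : ℝ) • x) qe + evalPt ((-1 : ℝ) • x) qo := by
          simp [evalPt, map_add]
        rw [hadd, hscE, hscO] at h
        exact h
      have hs1 : ((-1 : ℝ)) ^ (e - 1) ≠ 0 := pow_ne_zero _ (by norm_num)
      have hee : (-1 : ℝ) ^ e = -((-1 : ℝ) ^ (e - 1)) := by
        conv_lhs => rw [show e = (e - 1) + 1 by omega]
        rw [pow_succ]
        ring
      rw [hee] at h2
      have hba : evalPt x qo = evalPt x qe := by
        have h3 : (-1 : ℝ) ^ (e - 1) * (evalPt x qo - evalPt x qe) = 0 := by ring_nf; ring_nf at h2; linarith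
        rcases mul_eq_zero.1 h3 with h | h
        · exact absurd h hs1
        · linarith
      constructor <;> linarith
    obtain ⟨y0, hy0⟩ := hYne
    have hy0S : y0 ∈ S := hYsub hy0
    have hqeZ : ∀ z : Euc n, evalPt z qe = 0 := by
      intro z
      rcases eq_or_ne z 0 with rfl | hz
      · have h := hscE 0 y0
        rw [zero_smul] at h
        rw [h, (hq0 y0 hy0S).1, mul_zero]
      · have hu : ‖z‖⁻¹ • z ∈ S := by
          rw [hSdef, mem_sphere_zero_iff_norm]
          exact norm_smul_inv_norm (𝕜 := ℝ) hz
        have h := hscE ‖z‖ (‖z‖⁻¹ • z)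
        rw [smul_inv_smul₀ (norm_ne_zero_iff.2 hz)] at h
        rw [h, (hq0 _ hu).1, mul_zero]
    have hqoZ : ∀ z : Euc n, evalPt z qo = 0 := by
      intro z
      rcases eq_or_ne z 0 with rfl | hz
      · have h := hscO 0 y0
        rw [zero_smul] at h
        rw [h, (hq0 y0 hy0S).2, mul_zero]
      · have hu : ‖z‖⁻¹ • z ∈ S := by
          rw [hSdef, mem_sphere_zero_iff_norm]
          exact norm_smul_inv_norm (𝕜 := ℝ) hz
        have h := hscO ‖z‖ (‖z‖⁻¹ • z)
        rw [smul_inv_smul₀ (norm_ne_zero_iff.2 hz)] at h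
        rw [h, (hq0 _ hu).2, mul_zero]
    have hqe0 : qe = 0 := by
      apply MvPolynomial.funext
      intro x
      rw [map_zero]
      simpa [evalPt] using hqeZ ((WithLp.equiv 2 (Fin n → ℝ)).symm x)
    have hqo0 : qo = 0 := by
      apply MvPolynomial.funext
      intro x
      rw [map_zero]
      simpa [evalPt] using hqoZ ((WithLp.equiv 2 (Fin n → ℝ)).symm x)
    intro i
    cases i with
    | inl s =>
        have hcoeff : MvPolynomial.coeff (Multiset.toFinsupp s.1) qe = c (Sum.inl s) := by
          rw [hqe, MvPolynomial.coeff_sum, Finset.sum_eq_single s]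
          · rw [MvPolynomial.coeff_smul, SDAux.mprod_eq_monomial,
              MvPolynomial.coeff_monomial, if_pos rfl, smul_eq_mul, mul_one]
          · intro s' _ hne
            rw [MvPolynomial.coeff_smul, SDAux.mprod_eq_monomial,
              MvPolynomial.coeff_monomial, if_neg, smul_zero]
            intro hEq
            exact hne (Subtype.ext (Multiset.toFinsupp.injective hEq))
          · intro h
            exact absurd (Finset.mem_univ s) h
        rw [hqe0] at hcoeff
        simpa using hcoeff.symm
    | inr s =>
        have hcoeff : MvPolynomial.coeff (Multiset.toFinsupp s.1) qo = c (Sum.inr s) := by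
          rw [hqo, MvPolynomial.coeff_sum, Finset.sum_eq_single s]
          · rw [MvPolynomial.coeff_smul, SDAux.mprod_eq_monomial,
              MvPolynomial.coeff_monomial, if_pos rfl, smul_eq_mul, mul_one]
          · intro s' _ hne
            rw [MvPolynomial.coeff_smul, SDAux.mprod_eq_monomial,
              MvPolynomial.coeff_monomial, if_neg, smul_zero]
            intro hEq
            exact hne (Subtype.ext (Multiset.toFinsupp.injective hEq))
          · intro h
            exact absurd (Finset.mem_univ s) h
        rw [hqo0] at hcoeff
        simpa using hcoeff.symm
  -- Step 3: count
  have hle := hli.fintype_card_le_finrank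
  have hfr : Module.finrank ℝ (↥Y → ℝ) = Y.card := by
    rw [Module.finrank_pi]
    exact Fintype.card_coe Y
  rw [hfr] at hle
  have hcι : Fintype.card (Sym (Fin n) e ⊕ Sym (Fin n) (e - 1))
      = (n + e - 1).choose e + (n + e - 2).choose (e - 1) := by
    rw [Fintype.card_sum, Sym.card_sym_eq_choose, Sym.card_sym_eq_choose, Fintype.card_fin]
    congr 1
    rw [show n + (e - 1) - 1 = n + e - 2 by omega]
  have key : (n - 1 + e).choose (n - 1) + (n - 2 + e).choose (n - 1)
      = Fintype.card (Sym (Fin n) e ⊕ Sym (Fin n) (e - 1)) := by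
    rw [hcι, show n - 1 + e = n + e - 1 by omega, show n - 2 + e = n + e - 2 by omega]
    have h3 : (n + e - 1).choose (n - 1) = (n + e - 1).choose e := by
      have h := Nat.choose_symm (show e ≤ n + e - 1 by omega)
      rwa [show n + e - 1 - e = n - 1 by omega] at h
    have h4 : (n + e - 2).choose (n - 1) = (n + e - 2).choose (e - 1) := by
      have h := Nat.choose_symm (show e - 1 ≤ n + e - 2 by omega)
      rwa [show n + e - 2 - (e - 1) = n - 1 by omega] at h
    rw [h3, h4]
  rw [key]
  exact hle


end
end

section
/- If X ⊆ S^{n−1} is an s-distance set (n ≥ 2), then |X| ≤ C(n−1+s, n−1) + C(n−2+s, n−1). -/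
open MeasureTheory Metric Finset
open scoped Classical RealInnerProductSpace

noncomputable section

def Tset (m t : ℕ) : Finset (Fin m → ℕ) :=
  (Fintype.piFinset fun _ => Finset.range (t+1)).filter (fun α => ∑ i, α i ≤ t)

lemma mem_Tset {m t : ℕ} (α : Fin m → ℕ) : α ∈ Tset m t ↔ ∑ i, α i ≤ t := by
  simp only [Tset, Finset.mem_filter, Fintype.mem_piFinset, Finset.mem_range, Nat.lt_succ_iff]
  refine ⟨fun h => h.2, fun h => ⟨fun i => le_trans ?_ h, h⟩⟩
  exact Finset.single_le_sum (fun j _ => Nat.zero_le _) (Finset.mem_univ i)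

lemma sum_choose_hockey (m t : ℕ) :
    ∑ k ∈ Finset.range (t+1), (m + k).choose m = (m + t + 1).choose (m + 1) := by
  induction t with
  | zero => simp
  | succ t ih =>
    rw [Finset.sum_range_succ, ih, show m+(t+1) = m+t+1 from by ring]
    conv_rhs => rw [Nat.choose_succ_succ]
    simp only [Nat.succ_eq_add_one]
    omega

lemma card_Tset (m t : ℕ) : (Tset m t).card = (m + t).choose m := by
  induction m generalizing t with
  | zero =>
    rw [Nat.choose_zero_right]
    have : Tset 0 t = Fintype.piFinset fun _ => Finset.range (t+1) := by
      rw [Tset, Finset.filter_true_of_mem]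
      intro α _; simp
    rw [this, Fintype.card_piFinset]
    simp
  | succ m ih =>
    have hset : Tset (m+1) t =
        (Finset.range (t+1)).biUnion
          (fun k => (Tset m (t - k)).image (fun β => Fin.cons (α := fun _ => ℕ) k β)) := by
      ext α
      simp only [Finset.mem_biUnion, Finset.mem_range, Finset.mem_image, Nat.lt_succ_iff,
        mem_Tset]
      constructor
      · intro h
        have hsum : ∑ i, α i = α 0 + ∑ i : Fin m, α i.succ := Fin.sum_univ_succ α
        refine ⟨α 0, by omega, Fin.tail α, ?_, Fin.cons_self_tail α⟩
        have : ∑ i : Fin m, Fin.tail α i = ∑ i : Fin m, α i.succ := rfl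
        omega
      · rintro ⟨k, hk, β, hβ, rfl⟩
        have hsum : ∑ i, Fin.cons (α := fun _ => ℕ) k β i = k + ∑ i : Fin m, β i := by
          rw [Fin.sum_univ_succ]; simp
        omega
    rw [hset, Finset.card_biUnion]
    · have h1 : ∀ k ∈ Finset.range (t+1),
          ((Tset m (t - k)).image (fun β => Fin.cons (α := fun _ => ℕ) k β)).card
            = (m + (t - k)).choose m := by
        intro k _
        rw [Finset.card_image_of_injective _ (Fin.cons_right_injective (α := fun _ => ℕ) k), ih]
      rw [Finset.sum_congr rfl h1]
      have := Finset.sum_range_reflect (fun j => (m + j).choose m) (t+1)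
      simp only [Nat.add_sub_cancel] at this
      calc ∑ k ∈ Finset.range (t+1), (m + (t - k)).choose m
          = ∑ j ∈ Finset.range (t+1), (m + j).choose m := this
        _ = (m + t + 1).choose (m + 1) := sum_choose_hockey m t
        _ = (m + 1 + t).choose (m + 1) := by rw [show m+t+1 = m+1+t from by ring]
    · intro k1 _ k2 _ hne
      simp only [Finset.disjoint_left, Finset.mem_image]
      rintro a ⟨β1, _, rfl⟩ ⟨β2, _, h⟩
      exact hne (by simpa using congrFun h.symm 0)

/-- Monomial functions restricted to a finite point set. -/
def monoY {n : ℕ} (Y : Finset (Euc n)) (α : Fin n → ℕ) : ↥Y → ℝ :=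
  fun x => ∏ i, ((x : Euc n) i) ^ α i

/-- On a set of unit vectors, every monomial of total degree at most `s` lies in the
span of the monomials of total degree at most `s` whose first exponent is at most 1. -/
lemma mono_mem_span {n s : ℕ} [NeZero n] (Y : Finset (Euc n))
    (hunit : ∀ x : ↥Y, ∑ i, ((x : Euc n) i) ^ 2 = 1) :
    ∀ α : Fin n → ℕ, (∑ i, α i) ≤ s →
      monoY Y α ∈ Submodule.span ℝ
        (↑(((Tset n s).filter (fun α => α 0 ≤ 1)).image (monoY Y)) : Set (↥Y → ℝ)) := by
  suffices h : ∀ k : ℕ, ∀ α : Fin n → ℕ, α 0 ≤ k → (∑ i, α i) ≤ s →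
      monoY Y α ∈ Submodule.span ℝ
        (↑(((Tset n s).filter (fun α => α 0 ≤ 1)).image (monoY Y)) : Set (↥Y → ℝ)) by
    intro α hα
    exact h (α 0) α le_rfl hα
  intro k
  induction k using Nat.strong_induction_on with
  | _ k IH =>
    intro α hk hsum
    by_cases h1 : α 0 ≤ 1
    · apply Submodule.subset_span
      exact Finset.mem_coe.2 (Finset.mem_image_of_mem (monoY Y)
        (Finset.mem_filter.2 ⟨(mem_Tset α).2 hsum, h1⟩))
    · push_neg at h1
      set α' : Fin n → ℕ := Function.update α 0 (α 0 - 2) with hα'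
      have hα'0 : α' 0 = α 0 - 2 := by simp [hα']
      have hα'ne : ∀ i : Fin n, i ≠ 0 → α' i = α i := fun i hi =>
        Function.update_of_ne hi _ _
      have hsum' : (∑ i, α' i) + 2 = ∑ i, α i := by
        have e1 := (Finset.add_sum_erase Finset.univ α' (Finset.mem_univ 0)).symm
        have e2 := (Finset.add_sum_erase Finset.univ α (Finset.mem_univ 0)).symm
        have e3 : ∑ i ∈ Finset.univ.erase (0 : Fin n), α' i
            = ∑ i ∈ Finset.univ.erase (0 : Fin n), α i :=
          Finset.sum_congr rfl (fun i hi => hα'ne i (Finset.ne_of_mem_erase hi))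
        omega
      have hsumupd : ∀ j : Fin n, ∑ i, Function.update α' j (α' j + 2) i = (∑ i, α' i) + 2 := by
        intro j
        rw [Finset.sum_update_of_mem (Finset.mem_univ j), Finset.sdiff_singleton_eq_erase]
        have := Finset.add_sum_erase Finset.univ α' (Finset.mem_univ j)
        omega
      have heq : monoY Y α = monoY Y α'
          - ∑ j ∈ Finset.univ.erase (0 : Fin n), monoY Y (Function.update α' j (α' j + 2)) := by
        funext x
        have hx2 : ((x : Euc n) 0) ^ 2 = 1 - ∑ i ∈ Finset.univ.erase (0 : Fin n), ((x : Euc n) i) ^ 2 := by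
          have h := hunit x
          rw [← Finset.add_sum_erase _ _ (Finset.mem_univ 0)] at h
          linarith
        have hupd : ∀ j ∈ Finset.univ.erase (0 : Fin n),
            monoY Y (Function.update α' j (α' j + 2)) x = ((x : Euc n) j) ^ 2 * monoY Y α' x := by
          intro j _
          show (∏ i, ((x : Euc n) i) ^ (Function.update α' j (α' j + 2)) i) = _
          rw [← Finset.mul_prod_erase Finset.univ
                (fun i => ((x : Euc n) i) ^ (Function.update α' j (α' j + 2)) i)
                (Finset.mem_univ j),
              show monoY Y α' x = ∏ i, ((x : Euc n) i) ^ α' i from rfl,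
              ← Finset.mul_prod_erase Finset.univ (fun i => ((x : Euc n) i) ^ α' i)
                (Finset.mem_univ j)]
          have : ∀ i ∈ Finset.univ.erase j,
              ((x : Euc n) i) ^ (Function.update α' j (α' j + 2)) i = ((x : Euc n) i) ^ α' i := by
            intro i hi
            rw [Function.update_of_ne (Finset.ne_of_mem_erase hi)]
          rw [Finset.prod_congr rfl this, Function.update_self]
          ring
        have hP : monoY Y α x
            = ((x : Euc n) 0) ^ (α 0) * ∏ i ∈ Finset.univ.erase (0 : Fin n), ((x : Euc n) i) ^ α i :=
          (Finset.mul_prod_erase Finset.univ (fun i => ((x : Euc n) i) ^ α i)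
            (Finset.mem_univ 0)).symm
        have hP' : monoY Y α' x
            = ((x : Euc n) 0) ^ (α 0 - 2) * ∏ i ∈ Finset.univ.erase (0 : Fin n), ((x : Euc n) i) ^ α i := by
          show (∏ i, ((x : Euc n) i) ^ α' i) = _
          rw [← Finset.mul_prod_erase Finset.univ (fun i => ((x : Euc n) i) ^ α' i)
            (Finset.mem_univ 0), hα'0,
            Finset.prod_congr rfl (fun i hi => by rw [hα'ne i (Finset.ne_of_mem_erase hi)])]
        have hpow : ((x : Euc n) 0) ^ (α 0) = ((x : Euc n) 0) ^ 2 * ((x : Euc n) 0) ^ (α 0 - 2) := by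
          rw [← pow_add]
          congr 1
          omega
        have hsub : (monoY Y α' - ∑ j ∈ Finset.univ.erase (0 : Fin n),
            monoY Y (Function.update α' j (α' j + 2))) x
            = monoY Y α' x - ∑ j ∈ Finset.univ.erase (0 : Fin n),
                monoY Y (Function.update α' j (α' j + 2)) x := by
          simp [Finset.sum_apply]
        rw [hsub, Finset.sum_congr rfl hupd, ← Finset.sum_mul, hP, hpow, hx2, hP']
        ring
      rw [heq]
      have hklt : α 0 - 2 < k := by omega
      refine sub_mem (IH (α 0 - 2) hklt α' (le_of_eq hα'0) (by omega))
        (Submodule.sum_mem _ ?_)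
      intro j hj
      have hjne : j ≠ 0 := Finset.ne_of_mem_erase hj
      refine IH (α 0 - 2) hklt _ ?_ ?_
      · rw [Function.update_of_ne (Ne.symm hjne), hα'0]
      · rw [hsumupd j]
        omega

/-- Evaluation of a polynomial of total degree at most `s` on a set of unit vectors
lies in the span of the reduced monomials. -/
lemma eval_mem_span {n s : ℕ} [NeZero n] (Y : Finset (Euc n))
    (hunit : ∀ x : ↥Y, ∑ i, ((x : Euc n) i) ^ 2 = 1)
    (p : MvPolynomial (Fin n) ℝ) (hp : p.totalDegree ≤ s) :
    (fun x : ↥Y => MvPolynomial.eval (fun i => (x : Euc n) i) p)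
      ∈ Submodule.span ℝ
        (↑(((Tset n s).filter (fun α => α 0 ≤ 1)).image (monoY Y)) : Set (↥Y → ℝ)) := by
  have hrep : (fun x : ↥Y => MvPolynomial.eval (fun i => (x : Euc n) i) p)
      = ∑ d ∈ p.support, (MvPolynomial.coeff d p) • monoY Y (fun i => d i) := by
    funext x
    rw [MvPolynomial.eval_eq']
    simp [monoY, Finset.sum_apply]
  rw [hrep]
  refine Submodule.sum_mem _ (fun d hd => Submodule.smul_mem _ _ ?_)
  apply mono_mem_span Y hunit
  have h1 := MvPolynomial.le_totalDegree hd
  have h2 : d.sum (fun _ e => e) = ∑ i, d i := by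
    rw [Finsupp.sum_fintype]
    intro; rfl
  omega

lemma euc_norm_sq {n : ℕ} (u : Euc n) : ‖u‖ ^ 2 = ∑ i, (u i) ^ 2 := by
  rw [EuclideanSpace.norm_eq, Real.sq_sqrt (Finset.sum_nonneg fun i _ => sq_nonneg _)]
  exact Finset.sum_congr rfl fun i _ => by rw [Real.norm_eq_abs, sq_abs]

lemma euc_dist_sq {n : ℕ} (x y : Euc n) (hx : ‖x‖ = 1) (hy : ‖y‖ = 1) :
    ‖x - y‖ ^ 2 = 2 - 2 * ∑ i, x i * y i := by
  have hx' : ∑ i, (x i) ^ 2 = 1 := by rw [← euc_norm_sq, hx]; norm_num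
  have hy' : ∑ i, (y i) ^ 2 = 1 := by rw [← euc_norm_sq, hy]; norm_num
  rw [euc_norm_sq]
  have h1 : ∀ i ∈ Finset.univ, ((x - y) i) ^ 2 = ((x i) ^ 2 + (y i) ^ 2) - 2 * (x i * y i) := by
    intro i _
    have h2 : (x - y) i = x i - y i := rfl
    rw [h2]; ring
  rw [Finset.sum_congr rfl h1, Finset.sum_sub_distrib, Finset.sum_add_distrib, hx', hy',
    ← Finset.mul_sum]
  ring


/-- If `X ⊆ S^{n-1}` is an `s`-distance set (`n ≥ 2`), then
`|X| ≤ C(n-1+s, n-1) + C(n-2+s, n-1)`. -/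
theorem distance_set_card_upper_bound (n s : ℕ) (hn : 2 ≤ n)
    (Y : Finset (Euc n))
    (hYs : (↑Y : Set (Euc n)) ⊆ Metric.sphere (0 : Euc n) 1)
    (hs : ({d : ℝ | ∃ x ∈ Y, ∃ y ∈ Y, x ≠ y ∧ d = ‖x - y‖}).ncard = s) :
    Y.card ≤ (n - 1 + s).choose (n - 1) + (n - 2 + s).choose (n - 1) := by
  haveI : NeZero n := ⟨by omega⟩
  classical
  have hD : ({d : ℝ | ∃ x ∈ Y, ∃ y ∈ Y, x ≠ y ∧ d = ‖x - y‖}).Finite := by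
    apply Set.Finite.subset ((Y.finite_toSet.prod Y.finite_toSet).image
      (fun p : Euc n × Euc n => ‖p.1 - p.2‖))
    rintro d ⟨x, hx, y, hy, hne, rfl⟩
    exact ⟨(x, y), ⟨hx, hy⟩, rfl⟩
  set A : Finset ℝ := hD.toFinset with hA
  have hAcard : A.card = s := by rw [← hs, hA, Set.ncard_eq_toFinset_card _ hD]
  have hdistA : ∀ x ∈ Y, ∀ y ∈ Y, x ≠ y → ‖x - y‖ ∈ A := by
    intro x hx y hy hne
    rw [hA, Set.Finite.mem_toFinset]
    exact ⟨x, hx, y, hy, hne, rfl⟩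
  have hApos : ∀ d ∈ A, 0 < d := by
    intro d hd
    rw [hA, Set.Finite.mem_toFinset] at hd
    obtain ⟨x, hx, y, hy, hne, rfl⟩ := hd
    exact norm_pos_iff.2 (sub_ne_zero_of_ne hne)
  rcases Nat.eq_zero_or_pos s with hs0 | hs1
  · subst hs0
    have hYone : Y.card ≤ 1 := by
      rw [Finset.card_le_one]
      intro a ha b hb
      by_contra hab
      have hmem := hdistA a ha b hb hab
      rw [Finset.card_eq_zero.1 hAcard] at hmem
      exact absurd hmem (Finset.notMem_empty _)
    have h1 : (n - 1 + 0).choose (n - 1) = 1 := by rw [Nat.add_zero, Nat.choose_self]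
    omega
  -- now `s ≥ 1`
  obtain ⟨m, rfl⟩ : ∃ m, n = m + 1 := ⟨n - 1, by omega⟩
  have hm : 1 ≤ m := by omega
  have hnorm1 : ∀ x : ↥Y, ‖(x : Euc (m+1))‖ = 1 := fun x =>
    mem_sphere_zero_iff_norm.1 (hYs x.2)
  have hunit : ∀ x : ↥Y, ∑ i, ((x : Euc (m+1)) i) ^ 2 = 1 := by
    intro x
    rw [← euc_norm_sq, hnorm1 x]
    norm_num
  set I : Finset (Fin (m+1) → ℕ) := (Tset (m+1) s).filter (fun α => α 0 ≤ 1) with hI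
  set V : Submodule ℝ (↥Y → ℝ) := Submodule.span ℝ (↑(I.image (monoY Y)) : Set (↥Y → ℝ)) with hV
  set v : ↥Y → (↥Y → ℝ) :=
    fun y x => ∏ d ∈ A, (‖(x : Euc (m+1)) - (y : Euc (m+1))‖ ^ 2 - d ^ 2) with hv
  have hvmem : ∀ y : ↥Y, v y ∈ V := by
    intro y
    set p : MvPolynomial (Fin (m+1)) ℝ :=
      ∏ d ∈ A, (MvPolynomial.C (2 - d ^ 2)
        - ∑ i, MvPolynomial.C (2 * (y : Euc (m+1)) i) * MvPolynomial.X i) with hp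
    have hdeg : p.totalDegree ≤ s := by
      refine le_trans (MvPolynomial.totalDegree_finset_prod _ _) ?_
      have hfac : ∀ d ∈ A, (MvPolynomial.C (2 - d ^ 2)
          - ∑ i, MvPolynomial.C (2 * (y : Euc (m+1)) i) * MvPolynomial.X i).totalDegree ≤ 1 := by
        intro d _
        refine le_trans (MvPolynomial.totalDegree_sub _ _) ?_
        rw [max_le_iff]
        refine ⟨by rw [MvPolynomial.totalDegree_C]; exact Nat.zero_le 1, ?_⟩
        refine le_trans (MvPolynomial.totalDegree_finset_sum _ _) ?_
        apply Finset.sup_le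
        intro i _
        refine le_trans (MvPolynomial.totalDegree_mul _ _) ?_
        rw [MvPolynomial.totalDegree_C, MvPolynomial.totalDegree_X]
      refine le_trans (Finset.sum_le_sum hfac) ?_
      simp [hAcard]
    have hveq : v y = fun x : ↥Y => MvPolynomial.eval (fun i => (x : Euc (m+1)) i) p := by
      funext x
      rw [hv, hp]
      simp only [map_prod, map_sub, MvPolynomial.eval_C, map_sum, map_mul, MvPolynomial.eval_X]
      refine Finset.prod_congr rfl fun d _ => ?_
      rw [euc_dist_sq _ _ (hnorm1 x) (hnorm1 y)]
      have hss : ∑ i, 2 * (y : Euc (m+1)) i * (x : Euc (m+1)) i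
          = 2 * ∑ i, (x : Euc (m+1)) i * (y : Euc (m+1)) i := by
        rw [Finset.mul_sum]
        exact Finset.sum_congr rfl fun i _ => by ring
      rw [hss]
      ring
    rw [hveq, hV, hI]
    exact eval_mem_span Y hunit p hdeg
  have hne0 : ∀ y : ↥Y, v y y ≠ 0 := by
    intro y
    rw [hv]
    simp only [sub_self, norm_zero]
    rw [Finset.prod_ne_zero_iff]
    intro d hd hzero
    have hdp := hApos d hd
    nlinarith [hdp]
  have hvz : ∀ y z : ↥Y, y ≠ z → v y z = 0 := by
    intro y z hyz
    rw [hv]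
    have hne : (z : Euc (m+1)) ≠ (y : Euc (m+1)) := fun h => hyz (Subtype.ext h.symm)
    apply Finset.prod_eq_zero (hdistA _ z.2 _ y.2 hne)
    simp
  have hindep : LinearIndependent ℝ v := by
    rw [linearIndependent_iff']
    intro t g hg z hz
    have h0 := congrFun hg z
    have h1 : ∑ i ∈ t, g i * v i z = 0 := by
      simpa [Finset.sum_apply] using h0
    rw [Finset.sum_eq_single_of_mem z hz (fun b _ hb => by rw [hvz b z hb, mul_zero])] at h1
    exact (mul_eq_zero.1 h1).resolve_right (hne0 z)
  have hle1 : Y.card ≤ Module.finrank ℝ V := by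
    haveI : Module.Finite ℝ V := by rw [hV]; infer_instance
    let v' : ↥Y → V := fun y => ⟨v y, hvmem y⟩
    have hcomp : (V.subtype ∘ v') = v := rfl
    have hindep' : LinearIndependent ℝ v' :=
      LinearIndependent.of_comp V.subtype (by rw [hcomp]; exact hindep)
    have hcard := hindep'.fintype_card_le_finrank
    simpa [Fintype.card_coe] using hcard
  have hle2 : Module.finrank ℝ V ≤ I.card := by
    rw [hV]
    refine le_trans ?_ (Finset.card_image_le (f := monoY Y) (s := I))
    exact finrank_span_finset_le_card _
  have hIsplit : I = ((Tset m s).image (fun β => Fin.cons (α := fun _ => ℕ) 0 β))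
      ∪ ((Tset m (s-1)).image (fun β => Fin.cons (α := fun _ => ℕ) 1 β)) := by
    rw [hI]
    ext α
    simp only [Finset.mem_filter, Finset.mem_union, Finset.mem_image, mem_Tset]
    constructor
    · rintro ⟨hsum, h01⟩
      have hsum1 : ∑ i, α i = α 0 + ∑ i : Fin m, α i.succ := Fin.sum_univ_succ α
      have htail : ∑ i : Fin m, Fin.tail α i = ∑ i : Fin m, α i.succ := rfl
      rcases Nat.le_one_iff_eq_zero_or_eq_one.1 h01 with h0 | h0
      · refine Or.inl ⟨Fin.tail α, by omega, ?_⟩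
        conv_rhs => rw [← Fin.cons_self_tail α]
        rw [h0]
      · refine Or.inr ⟨Fin.tail α, by omega, ?_⟩
        conv_rhs => rw [← Fin.cons_self_tail α]
        rw [h0]
    · rintro (⟨β, hβ, rfl⟩ | ⟨β, hβ, rfl⟩)
      · have hsum1 : ∑ i, Fin.cons (α := fun _ => ℕ) 0 β i = 0 + ∑ i : Fin m, β i := by
          rw [Fin.sum_univ_succ]; simp
        exact ⟨by omega, by simp⟩
      · have hsum1 : ∑ i, Fin.cons (α := fun _ => ℕ) 1 β i = 1 + ∑ i : Fin m, β i := by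
          rw [Fin.sum_univ_succ]; simp
        exact ⟨by omega, by simp⟩
  have hdisj : Disjoint ((Tset m s).image (fun β => Fin.cons (α := fun _ => ℕ) 0 β))
      ((Tset m (s-1)).image (fun β => Fin.cons (α := fun _ => ℕ) 1 β)) := by
    simp only [Finset.disjoint_left, Finset.mem_image]
    rintro a ⟨β1, _, rfl⟩ ⟨β2, _, h⟩
    simpa using congrFun h.symm 0
  have hIcard : I.card = (m + s).choose m + (m + (s-1)).choose m := by
    rw [hIsplit, Finset.card_union_of_disjoint hdisj,
      Finset.card_image_of_injective _ (Fin.cons_right_injective (α := fun _ => ℕ) 0),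
      Finset.card_image_of_injective _ (Fin.cons_right_injective (α := fun _ => ℕ) 1),
      card_Tset, card_Tset]
  calc Y.card ≤ Module.finrank ℝ V := hle1
    _ ≤ I.card := hle2
    _ = (m + s).choose m + (m + (s-1)).choose m := hIcard
    _ = (m + 1 - 1 + s).choose (m + 1 - 1) + (m + 1 - 2 + s).choose (m + 1 - 1) := by
        rw [show m + 1 - 1 = m by omega, show m + 1 - 2 + s = m + (s - 1) by omega]


end
end
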